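/- For fixed integer a > 0, if λ_{a,n} denotes the largest real root of LT_{a,n}(t) = t^{2n} - t^{n+a} - t^n - t^{n-a} + 1 (for n > a), then λ_{a,n}^{2n} → ((3+√5)/2)^2 = γ_0^4 as n → ∞. -/

import Mathlib

open Filter

set_option maxHeartbeats 1000000 in
theorem LTa_root_pow_tendsto_golden_fourth (a : ℕ) (ha : 0 < a) (lam : ℕ → ℝ)
    (hlam : ∀ n, a < n → 1 < lam n ∧
      (lam n) ^ (2 * n) - (lam n) ^ (n + a) - (lam n) ^ n - (lam n) ^ (n - a) + 1 = 0) :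
    Tendsto (fun n => (lam n) ^ (2 * n)) atTop
      (nhds (((1 + Real.sqrt 5) / 2) ^ 4)) := by
  -- Step A: lam n ^ (n - a) ≤ 3 for n > a
  have hA : ∀ n, a < n → (lam n) ^ (n - a) ≤ 3 := by
    intro n hn
    obtain ⟨hl, heq⟩ := hlam n hn
    have hl0 : (0:ℝ) < lam n := lt_trans one_pos hl
    have h1 : (lam n) ^ n ≤ (lam n) ^ (n + a) := pow_le_pow_right₀ hl.le (by omega)
    have h2 : (lam n) ^ (n - a) ≤ (lam n) ^ (n + a) := pow_le_pow_right₀ hl.le (by omega)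
    have h3 : (lam n) ^ (2 * n) = (lam n) ^ (n + a) * (lam n) ^ (n - a) := by
      rw [← pow_add]; congr 1; omega
    nlinarith [pow_pos hl0 (n + a)]
  -- Step B: lam n → 1
  have hB : Tendsto lam atTop (nhds 1) := by
    have hup : Tendsto (fun n : ℕ => (3:ℝ) ^ (((n - a : ℕ) : ℝ))⁻¹) atTop (nhds 1) := by
      have h0 : Tendsto (fun n : ℕ => (((n - a : ℕ) : ℝ))⁻¹) atTop (nhds 0) :=
        (tendsto_natCast_atTop_atTop.comp (tendsto_sub_atTop_nat a)).inv_tendsto_atTop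
      have := (Real.continuousAt_const_rpow (show (3:ℝ) ≠ 0 by norm_num)).tendsto.comp h0
      simpa [Function.comp_def] using this
    refine tendsto_of_tendsto_of_tendsto_of_le_of_le' tendsto_const_nhds hup ?_ ?_
    · filter_upwards [eventually_gt_atTop a] with n hn
      exact (hlam n hn).1.le
    · filter_upwards [eventually_gt_atTop a] with n hn
      have hl0 : (0:ℝ) < lam n := lt_trans one_pos (hlam n hn).1
      have hm : (0:ℝ) < ((n - a : ℕ) : ℝ) := by
        exact_mod_cast (show 0 < n - a by omega)
      have h := Real.rpow_le_rpow (by positivity) (hA n hn) (inv_nonneg.mpr hm.le)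
      calc lam n = ((lam n) ^ (n - a)) ^ (((n - a : ℕ) : ℝ))⁻¹ := by
            rw [← Real.rpow_natCast (lam n) (n - a), ← Real.rpow_mul hl0.le,
              mul_inv_cancel₀ hm.ne', Real.rpow_one]
        _ ≤ (3:ℝ) ^ (((n - a : ℕ) : ℝ))⁻¹ := h
  -- Step C: (lam n)^a and its inverse tend to 1, so s n → 3
  have hC : Tendsto (fun n => (lam n) ^ a) atTop (nhds 1) := by
    have := hB.pow a
    rwa [one_pow] at this
  have hD : Tendsto (fun n => ((lam n) ^ a)⁻¹) atTop (nhds 1) := by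
    simpa using hC.inv₀ one_ne_zero
  set s : ℕ → ℝ := fun n => (lam n) ^ a + 1 + ((lam n) ^ a)⁻¹ with hs_def
  have hs : Tendsto s atTop (nhds 3) := by
    have h := (hC.add (tendsto_const_nhds (x := (1:ℝ)))).add hD
    norm_num at h
    exact h
  -- the limiting function
  set g : ℝ → ℝ := fun t => ((t + Real.sqrt (t ^ 2 - 4)) / 2) ^ 2 with hg_def
  have hgc : Continuous g := by
    apply Continuous.pow
    apply Continuous.div_const
    exact continuous_id.add (Real.continuous_sqrt.comp ((continuous_pow 2).sub continuous_const))
  have hgs : Tendsto (fun n => g (s n)) atTop (nhds (g 3)) :=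
    (hgc.continuousAt.tendsto.comp hs)
  -- eventual equality
  have hev : ∀ᶠ n in atTop, g (s n) = (lam n) ^ (2 * n) := by
    filter_upwards [eventually_gt_atTop a] with n hn
    obtain ⟨hl, heq⟩ := hlam n hn
    have hl0 : (0:ℝ) < lam n := lt_trans one_pos hl
    set x := (lam n) ^ n with hx_def
    set b := (lam n) ^ a with hb_def
    have hb0 : (0:ℝ) < b := pow_pos hl0 a
    have hx1 : 1 < x := one_lt_pow₀ hl (by omega)
    have e2 : (lam n) ^ (n + a) = x * b := pow_add _ _ _
    have e3 : (lam n) ^ (n - a) = x * b⁻¹ := pow_sub₀ _ hl0.ne' hn.le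
    have e1 : (lam n) ^ (2 * n) = x ^ 2 := by rw [two_mul, pow_add, sq]
    have hq : x ^ 2 - s n * x + 1 = 0 := by
      rw [e1, e2, e3] at heq
      simp only [hs_def, ← hb_def]
      ring_nf
      ring_nf at heq
      linarith [heq]
    have h2xs : 0 ≤ 2 * x - s n := by
      have hsx : s n * x = x ^ 2 + 1 := by linarith [hq]
      nlinarith [hx1, hb0]
    have hsqrt : Real.sqrt ((s n) ^ 2 - 4) = 2 * x - s n := by
      rw [show (s n) ^ 2 - 4 = (2 * x - s n) ^ 2 by linear_combination (-4 : ℝ) * hq]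
      exact Real.sqrt_sq h2xs
    rw [hg_def]
    simp only
    rw [hsqrt, e1]
    ring
  -- put together
  have hfinal : Tendsto (fun n => (lam n) ^ (2 * n)) atTop (nhds (g 3)) :=
    hgs.congr' hev
  have hval : g 3 = ((1 + Real.sqrt 5) / 2) ^ 4 := by
    have h5 : Real.sqrt 5 ^ 2 = 5 := Real.sq_sqrt (by norm_num)
    have : ((3:ℝ) ^ 2 - 4) = 5 := by norm_num
    rw [hg_def]
    simp only [this]
    linear_combination ((- Real.sqrt 5 ^ 2 - 4 * Real.sqrt 5 - 7) / 16) * h5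
  rwa [hval] at hfinal
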